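/- Let B₀ > 0, S > 0 and let N ≥ 1 be a natural number. Let F : ℕ → ℝ (indexed by k ≥ 1) satisfy 0 ≤ F(k) ≤ B₀S/(2π) for all k, suppose F is summable with ∑_{k=1}^∞ F(k) = N, and suppose k ↦ (2k−1)F(k) is summable. Then ∑_{k=1}^∞ B₀(2k−1)F(k) ≥ 2πN²/S + (B₀²S/(2π))·m·(1−m), where m = Int.fract(2πN/(B₀S)) is the fractional part of 2πN/(B₀S). -/

import Mathlib

open Real

private lemma sum_odd_real (M : ℕ) :
    ∑ k ∈ Finset.range M, (2 * (k : ℝ) + 1) = (M : ℝ) ^ 2 := by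
  induction M with
  | zero => simp
  | succ n ih => rw [Finset.sum_range_succ, ih]; push_cast; ring

/-- Minimization core of the magnetic Li–Yau inequality (Theorem 3.1):
`F k` (for `k ≥ 1`) is the mass put on the `k`-th Landau level `B₀(2k-1)`, capped by
`B₀ S / (2π)`, with total mass `N`.  Then the total energy is bounded below by
`2πN²/S + (B₀²S/(2π)) m (1-m)` with `m` the fractional part of `2πN/(B₀S)`. -/
theorem magnetic_li_yau_minimization
    (B₀ S : ℝ) (hB₀ : 0 < B₀) (hS : 0 < S) (N : ℕ) (hN : 1 ≤ N)
    (F : ℕ → ℝ)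
    (hF0 : ∀ k : ℕ, 1 ≤ k → 0 ≤ F k)
    (hFcap : ∀ k : ℕ, 1 ≤ k → F k ≤ B₀ * S / (2 * π))
    (hsum : Summable fun k : ℕ => F (k + 1))
    (htot : ∑' k : ℕ, F (k + 1) = (N : ℝ))
    (hsum2 : Summable fun k : ℕ => (2 * ((k : ℝ) + 1) - 1) * F (k + 1)) :
    2 * π * (N : ℝ) ^ 2 / S
        + B₀ ^ 2 * S / (2 * π) * Int.fract (2 * π * N / (B₀ * S))
          * (1 - Int.fract (2 * π * N / (B₀ * S)))
      ≤ ∑' k : ℕ, B₀ * (2 * ((k : ℝ) + 1) - 1) * F (k + 1) := by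
  have hπ : (0 : ℝ) < π := Real.pi_pos
  set c : ℝ := B₀ * S / (2 * π) with hc_def
  have hc : 0 < c := by positivity
  set x : ℝ := 2 * π * N / (B₀ * S) with hx_def
  have hx0 : 0 ≤ x := by positivity
  have hxc : c * x = N := by
    rw [hc_def, hx_def]; field_simp
  set m : ℝ := Int.fract x with hm_def
  have hm0 : 0 ≤ m := Int.fract_nonneg x
  set M : ℕ := (⌊x⌋).toNat with hM_def
  have hMx : (M : ℝ) = (⌊x⌋ : ℝ) := by
    rw [hM_def]; exact_mod_cast Int.toNat_of_nonneg (Int.floor_nonneg.mpr hx0)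
  have hxMm : x = (M : ℝ) + m := by
    have := Int.floor_add_fract x
    rw [← hm_def] at this
    linarith [hMx]
  -- basic facts about g k = F (k+1)
  have hg0 : ∀ k : ℕ, 0 ≤ F (k + 1) := fun k => hF0 (k + 1) (by omega)
  have hgc : ∀ k : ℕ, F (k + 1) ≤ c := fun k => hFcap (k + 1) (by omega)
  -- summability rewrites
  have hfun : (fun k : ℕ => (2 * (k : ℝ) + 1) * F (k + 1))
      = fun k : ℕ => (2 * ((k : ℝ) + 1) - 1) * F (k + 1) := by
    funext k; ring
  have hsum2' : Summable fun k : ℕ => (2 * (k : ℝ) + 1) * F (k + 1) := by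
    rw [hfun]; exact hsum2
  set h : ℕ → ℝ := fun k => (2 * (k : ℝ) + 1 - (2 * M + 1)) * F (k + 1) with hh_def
  have hsummh : Summable h := by
    have := hsum2'.sub (hsum.mul_left ((2 * (M : ℝ) + 1)))
    refine this.congr fun k => ?_
    simp only [hh_def]; ring
  set φ : ℕ → ℝ := fun k =>
    if k < M then (2 * (k : ℝ) + 1 - (2 * M + 1)) * c else 0 with hφ_def
  have hφ0 : ∀ k ∉ Finset.range M, φ k = 0 := by
    intro k hk
    rw [Finset.mem_range, not_lt] at hk
    simp only [hφ_def, if_neg (not_lt.mpr hk)]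
  have hφsum : Summable φ := summable_of_ne_finset_zero hφ0
  have hle : ∀ k : ℕ, φ k ≤ h k := by
    intro k
    by_cases hk : k < M
    · have hkM : (k : ℝ) < M := by exact_mod_cast hk
      simp only [hφ_def, hh_def, if_pos hk]
      exact mul_le_mul_of_nonpos_left (hgc k) (by linarith)
    · have hkM : (M : ℝ) ≤ k := by exact_mod_cast not_lt.mp hk
      simp only [hφ_def, hh_def, if_neg hk]
      exact mul_nonneg (by linarith) (hg0 k)
  have hφval : ∑' k, φ k = ((M : ℝ) ^ 2 - M * (2 * M + 1)) * c := by
    rw [tsum_eq_sum hφ0]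
    have h1 : ∑ k ∈ Finset.range M, φ k
        = ∑ k ∈ Finset.range M, (2 * (k : ℝ) + 1 - (2 * M + 1)) * c :=
      Finset.sum_congr rfl fun k hk => by
        simp only [hφ_def, if_pos (Finset.mem_range.mp hk)]
    rw [h1, ← Finset.sum_mul, Finset.sum_sub_distrib, sum_odd_real,
      Finset.sum_const, Finset.card_range]
    ring
  have hhval : ∑' k, h k
      = (∑' k : ℕ, (2 * (k : ℝ) + 1) * F (k + 1)) - (2 * M + 1) * N := by
    have h1 : ∑' k, h k = ∑' k : ℕ,
        ((2 * (k : ℝ) + 1) * F (k + 1) - (2 * (M : ℝ) + 1) * F (k + 1)) :=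
      tsum_congr fun k => by simp only [hh_def]; ring
    rw [h1, Summable.tsum_sub hsum2' (hsum.mul_left _), tsum_mul_left, htot]
  have hφh : ∑' k, φ k ≤ ∑' k, h k := Summable.tsum_le_tsum hle hφsum hsummh
  have hT : ((M : ℝ) ^ 2 - M * (2 * M + 1)) * c + (2 * M + 1) * N
      ≤ ∑' k : ℕ, (2 * (k : ℝ) + 1) * F (k + 1) := by
    rw [hφval] at hφh
    linarith [hhval ▸ hφh]
  have hN2 : (N : ℝ) = c * ((M : ℝ) + m) := by rw [← hxc, hxMm]
  have hgoalfun : (fun k : ℕ => B₀ * (2 * ((k : ℝ) + 1) - 1) * F (k + 1))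
      = fun k : ℕ => B₀ * ((2 * (k : ℝ) + 1) * F (k + 1)) := by
    funext k; ring
  rw [hgoalfun, tsum_mul_left]
  have key : 2 * π * (N : ℝ) ^ 2 / S + B₀ ^ 2 * S / (2 * π) * m * (1 - m)
      = B₀ * (c * ((M : ℝ) ^ 2 + (2 * M + 1) * m)) := by
    rw [hN2, hc_def]
    field_simp
    ring
  rw [key]
  have hcle : c * ((M : ℝ) ^ 2 + (2 * M + 1) * m)
      ≤ ∑' k : ℕ, (2 * (k : ℝ) + 1) * F (k + 1) := by
    have : c * ((M : ℝ) ^ 2 + (2 * M + 1) * m)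
        = ((M : ℝ) ^ 2 - M * (2 * M + 1)) * c + (2 * M + 1) * (c * ((M : ℝ) + m)) := by
      ring
    rw [this, ← hN2]
    exact hT
  exact mul_le_mul_of_nonneg_left hcle hB₀.le
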